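/- Let X be a type with decidable equality equipped with a linear order, and let A be a unital algebra over ℂ. Suppose γ : X → A and s : X → A satisfy the relations R': (R'₁) s x * s x = 1 and s x * s x' = s x' * s x for all x, x'; (R'₂) γ x * γ x' + γ x' * γ x = 2·1 if x = x' and = 0 if x ≠ x'; (R'₃) s x * γ x' * s x = −γ x' if x = x' and = γ x' if x ≠ x'. Define ξ x = Complex.I • (γ x * s x); for a finset J of X let Ξ_J denote the product of the ξ x for x ∈ J taken in increasing order, and Γ_J the product of the γ x for x ∈ J taken in increasing order. Then for all finsets J, J' of X: Ξ_J * Γ_{J'} = (−1)^{|J|·|J'|} • (Γ_{J'} * Ξ_J). -/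

import Mathlib

/-- The ordered product of `f x` over `x ∈ J`, taken in increasing order. -/
def ordProd {X : Type*} [LinearOrder X] {A : Type*} [Monoid A]
    (f : X → A) (J : Finset X) : A :=
  ((J.sort (· ≤ ·)).map f).prod

lemma aux_one {A : Type*} [Ring A] (a : A) (l : List A)
    (h : ∀ y ∈ l, a * y = -(y * a)) :
    a * l.prod = ((-1 : ℤ) ^ l.length) • (l.prod * a) := by
  induction l with
  | nil => simp
  | cons b t ih =>
    simp only [List.prod_cons, List.length_cons]
    rw [← mul_assoc, h b (by simp), neg_mul, mul_assoc,
      ih (fun y hy => h y (List.mem_cons_of_mem _ hy)), pow_succ]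
    rw [mul_smul_comm, mul_smul, neg_one_zsmul, smul_neg, mul_assoc]

lemma aux_two {A : Type*} [Ring A] (l1 l2 : List A)
    (h : ∀ x ∈ l1, ∀ y ∈ l2, x * y = -(y * x)) :
    l1.prod * l2.prod = ((-1 : ℤ) ^ (l1.length * l2.length)) • (l2.prod * l1.prod) := by
  induction l1 with
  | nil => simp
  | cons b t ih =>
    simp only [List.prod_cons, List.length_cons]
    rw [mul_assoc, ih (fun x hx => h x (List.mem_cons_of_mem _ hx)), mul_smul_comm,
      ← mul_assoc b, aux_one b l2 (h b List.mem_cons_self),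
      smul_mul_assoc, smul_smul, ← pow_add, mul_assoc]
    congr 2
    ring

theorem stmt_15 {X : Type*} [DecidableEq X] [LinearOrder X] {A : Type*} [Ring A]
    [Algebra ℂ A]
    (γ s : X → A)
    (hR1a : ∀ x : X, s x * s x = 1)
    (hR1b : ∀ x x' : X, s x * s x' = s x' * s x)
    (hR2 : ∀ x x' : X, γ x * γ x' + γ x' * γ x = if x = x' then (2 : A) * 1 else 0)
    (hR3 : ∀ x x' : X, s x * γ x' * s x = if x = x' then -γ x' else γ x')
    (ξ : X → A)
    (hξ : ∀ x : X, ξ x = Complex.I • (γ x * s x))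
    (J J' : Finset X) :
    ordProd ξ J * ordProd γ J' =
      ((-1 : ℤ) ^ (J.card * J'.card)) • (ordProd γ J' * ordProd ξ J) := by
  have hanti : ∀ x y : X, ξ x * γ y = -(γ y * ξ x) := by
    intro x y
    rw [hξ x, smul_mul_assoc, mul_smul_comm, ← smul_neg]
    congr 1
    by_cases hxy : x = y
    · subst hxy
      have hx := hR3 x x
      rw [if_pos rfl] at hx
      have h1 : s x * γ x = -(γ x * s x) := by
        calc s x * γ x = s x * γ x * (s x * s x) := by rw [hR1a x, mul_one]
          _ = (s x * γ x * s x) * s x := by noncomm_ring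
          _ = -γ x * s x := by rw [hx]
          _ = -(γ x * s x) := by noncomm_ring
      calc γ x * s x * γ x = γ x * (s x * γ x) := by noncomm_ring
        _ = γ x * (-(γ x * s x)) := by rw [h1]
        _ = -(γ x * (γ x * s x)) := by noncomm_ring
    · have hx := hR3 x y
      rw [if_neg hxy] at hx
      have h1 : s x * γ y = γ y * s x := by
        calc s x * γ y = s x * γ y * (s x * s x) := by rw [hR1a x, mul_one]
          _ = (s x * γ y * s x) * s x := by noncomm_ring
          _ = γ y * s x := by rw [hx]
      have h2 : γ x * γ y = -(γ y * γ x) := by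
        have h := hR2 x y
        rw [if_neg hxy] at h
        exact eq_neg_of_add_eq_zero_left h
      calc γ x * s x * γ y = γ x * (s x * γ y) := by noncomm_ring
        _ = γ x * (γ y * s x) := by rw [h1]
        _ = γ x * γ y * s x := by noncomm_ring
        _ = -(γ y * γ x) * s x := by rw [h2]
        _ = -(γ y * (γ x * s x)) := by noncomm_ring
  unfold ordProd
  have key := aux_two ((J.sort (· ≤ ·)).map ξ) ((J'.sort (· ≤ ·)).map γ) ?_
  · simpa using key
  · intro a ha b hb
    obtain ⟨x, hx, rfl⟩ := List.mem_map.mp ha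
    obtain ⟨y, hy, rfl⟩ := List.mem_map.mp hb
    exact hanti x y
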